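/- Let a > 0, β > 0, m ∈ ℕ and s ≥ 0. Then for every z > 0: (1/2)(a − βz) ∂h_a^C/∂z (z, m, s) + (1/2) z ∂²h_a^C/∂z² (z, m, s) = (m/2)(β+s) h_a^C(z, m−1, s) + (s/2)(a+m) h_a^C(z, m+1, s) − (1/2)( s(a+m) + m(β+s) ) h_a^C(z, m, s), where the first term on the right-hand side is absent when m = 0. This is the action of the one-dimensional Cox–Ingersoll–Ross generator on the gamma-type duality function, the building block of the proof of Theorem 4.1. -/

import Mathlib

/-- The gamma-type duality function `h_a^C(z, m, s)`. -/
noncomputable def hC (β a z : ℝ) (m : ℕ) (s : ℝ) : ℝ :=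
  (Real.Gamma a / Real.Gamma (a + m)) * ((β + s) / β) ^ a * (β + s) ^ m * z ^ m *
    Real.exp (-s * z)

open Real in
lemma base_hasDeriv (s : ℝ) (m : ℕ) (w : ℝ) :
    HasDerivAt (fun w : ℝ => w ^ m * Real.exp (-s * w))
      ((m : ℝ) * w ^ (m - 1) * Real.exp (-s * w) + w ^ m * (Real.exp (-s * w) * (-s))) w := by
  have h1 : HasDerivAt (fun w : ℝ => -s * w) (-s) w := by
    simpa using (hasDerivAt_id w).const_mul (-s)
  exact (hasDerivAt_pow m w).mul h1.exp

lemma hC_eq (β a s : ℝ) (m : ℕ) :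
    (fun w => hC β a w m s) = fun w =>
      (Real.Gamma a / Real.Gamma (a + m)) * ((β + s) / β) ^ a * (β + s) ^ m *
        (w ^ m * Real.exp (-s * w)) := by
  funext w; unfold hC; ring

lemma hC_deriv (β a s : ℝ) (m : ℕ) :
    deriv (fun w => hC β a w m s) = fun w =>
      (Real.Gamma a / Real.Gamma (a + m)) * ((β + s) / β) ^ a * (β + s) ^ m *
        (((m : ℝ) * w ^ (m - 1) - s * w ^ m) * Real.exp (-s * w)) := by
  rw [hC_eq]
  funext w
  rw [(((base_hasDeriv s m w).const_mul _)).deriv]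
  ring

lemma hC_deriv2 (β a s : ℝ) (m : ℕ) (w : ℝ) :
    deriv (deriv (fun w => hC β a w m s)) w =
      (Real.Gamma a / Real.Gamma (a + m)) * ((β + s) / β) ^ a * (β + s) ^ m *
        ((((m : ℝ) * ((m : ℝ) - 1) * w ^ (m - 2))
          - 2 * s * (m : ℝ) * w ^ (m - 1) + s ^ 2 * w ^ m) * Real.exp (-s * w)) := by
  rw [hC_deriv]
  have h1 : HasDerivAt (fun w : ℝ => -s * w) (-s) w := by
    simpa using (hasDerivAt_id w).const_mul (-s)
  have hmm : HasDerivAt (fun w : ℝ => ((m : ℝ) * w ^ (m - 1) - s * w ^ m))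
      ((m : ℝ) * (((m - 1 : ℕ) : ℝ) * w ^ (m - 1 - 1)) - s * ((m : ℝ) * w ^ (m - 1))) w :=
    ((hasDerivAt_pow (m - 1) w).const_mul (m : ℝ)).sub ((hasDerivAt_pow m w).const_mul s)
  have h2 : HasDerivAt (fun w => (Real.Gamma a / Real.Gamma (a + m)) * ((β + s) / β) ^ a * (β + s) ^ m * (((m : ℝ) * w ^ (m - 1) - s * w ^ m) * Real.exp (-s * w))) _ w :=
    (hmm.mul h1.exp).const_mul _
  rw [h2.deriv]
  rcases Nat.eq_zero_or_pos m with hm | hm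
  · subst hm; simp only [Nat.zero_sub, Nat.cast_zero]; ring
  · have e1 : ((m - 1 : ℕ) : ℝ) = (m : ℝ) - 1 := by
      push_cast [Nat.cast_sub (by omega : 1 ≤ m)]; ring
    have e2 : m - 1 - 1 = m - 2 := by omega
    rw [e1, e2]; ring

/-- The action of the one-dimensional Cox--Ingersoll--Ross generator on the gamma-type duality
function, the building block of the proof of Theorem 4.1. -/
theorem stmt10 (a : ℝ) (ha : 0 < a) (β : ℝ) (hβ : 0 < β) (m : ℕ) (s : ℝ) (hs : 0 ≤ s)
    (z : ℝ) (hz : 0 < z) :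
    (1 / 2) * (a - β * z) * deriv (fun w => hC β a w m s) z
      + (1 / 2) * z * deriv (deriv (fun w => hC β a w m s)) z
    = (m : ℝ) / 2 * (β + s) * hC β a z (m - 1) s
      + s / 2 * (a + m) * hC β a z (m + 1) s
      - (1 / 2) * (s * (a + m) + m * (β + s)) * hC β a z m s := by
  have hGm : Real.Gamma (a + m) ≠ 0 := (Real.Gamma_pos_of_pos (by positivity)).ne'
  have hG1 : Real.Gamma (a + (m + 1 : ℕ)) = (a + m) * Real.Gamma (a + m) := by
    push_cast
    rw [show a + ((m : ℝ) + 1) = (a + m) + 1 by ring, Real.Gamma_add_one (by positivity)]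
  rw [hC_deriv2, hC_deriv]
  rcases Nat.eq_zero_or_pos m with hm | hm
  · subst hm
    simp only [Nat.cast_zero, hC, hG1]
    norm_num
    field_simp
    ring
  · obtain ⟨k, rfl⟩ : ∃ k, m = k + 1 := ⟨m - 1, by omega⟩
    have hGk : Real.Gamma (a + (k + 1 : ℕ)) = (a + k) * Real.Gamma (a + k) := by
      push_cast
      rw [show a + ((k : ℝ) + 1) = (a + k) + 1 by ring, Real.Gamma_add_one (by positivity)]
    have hGkk : Real.Gamma (a + k) ≠ 0 := (Real.Gamma_pos_of_pos (by positivity)).ne'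
    have hG2 : Real.Gamma (a + ((k + 1 : ℕ) + 1 : ℕ)) =
        (a + (k + 1 : ℕ)) * ((a + k) * Real.Gamma (a + k)) := by
      rw [← hGk]
      push_cast
      rw [show a + ((k : ℝ) + 1 + 1) = (a + ((k : ℝ) + 1)) + 1 by ring,
        Real.Gamma_add_one (by positivity)]
      try push_cast
      try ring
    simp only [hC, Nat.add_sub_cancel, hG2, hGk]
    rcases Nat.eq_zero_or_pos k with hk | hk
    · subst hk
      norm_num
      field_simp
      ring
    · have e1 : ((k + 1 : ℕ) : ℝ) = (k : ℝ) + 1 := by push_cast; ring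
      have e2 : k + 1 - 2 = k - 1 := by omega
      have ez1 : z ^ (k + 1) = z ^ k * z := pow_succ z k
      have ez2 : z ^ (k + 1 + 1) = z ^ k * z * z := by rw [pow_succ, pow_succ]
      have ez3 : z ^ k = z ^ (k - 1) * z := by
        rw [← pow_succ]; congr 1; omega
      have eb1 : (β + s) ^ (k + 1) = (β + s) ^ k * (β + s) := pow_succ _ k
      have eb2 : (β + s) ^ (k + 1 + 1) = (β + s) ^ k * (β + s) * (β + s) := by
        rw [pow_succ, pow_succ]
      rw [e1, e2, ez1, ez2, eb1, eb2, ez3]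
      field_simp
      ring
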